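/- Let S be the decomposable operator on L²(X,μ;H) with measurable field T, and assume S is self-adjoint and T(ζ) is self-adjoint for μ-almost every ζ. Then S − i·1 is invertible, T(ζ) − i·1 is invertible for μ-almost every ζ, and the Cayley transform (S + i·1)·(S − i·1)⁻¹ is the decomposable operator with field ζ ↦ (T(ζ) + i·1)·(T(ζ) − i·1)⁻¹: for every g ∈ L²(X,μ;H), (((S + i·1)·Ring.inverse (S − i·1)) g)(ζ) = ((T(ζ) + i·1)·Ring.inverse (T(ζ) − i·1))(g(ζ)) for μ-almost every ζ ∈ X. -/
import Mathlib
open MeasureTheory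

lemma sa_unit_aux {A : Type*} [CStarAlgebra A] {a : A} (ha : IsSelfAdjoint a) :
    IsUnit (a - Complex.I • (1 : A)) := by
  have hI : Complex.I ∉ spectrum ℂ a := by
    intro h
    have := ha.mem_spectrum_eq_re h
    simp [Complex.ext_iff] at this
  have h2 := spectrum.notMem_iff.mp hI
  rw [Algebra.algebraMap_eq_smul_one] at h2
  simpa using h2.neg

/-- `T` is a measurable field of bounded operators: pointwise measurable and
essentially bounded in operator norm. -/
def MeasurableFieldOfOperators {X : Type*} [MeasurableSpace X]
    {H : Type*} [NormedAddCommGroup H] [InnerProductSpace ℂ H]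
    [MeasurableSpace H] [BorelSpace H]
    (μ : Measure X) (T : X → H →L[ℂ] H) : Prop :=
  (∀ x : H, Measurable fun ζ => T ζ x) ∧ ∃ C : ℝ, ∀ᵐ ζ ∂μ, ‖T ζ‖ ≤ C

/-- `S` is the decomposable operator on `L²(X, μ; H)` with field `T`. -/
def IsDecomposableOperatorWith {X : Type*} [MeasurableSpace X]
    {H : Type*} [NormedAddCommGroup H] [InnerProductSpace ℂ H]
    (μ : Measure X) (S : Lp H 2 μ →L[ℂ] Lp H 2 μ) (T : X → H →L[ℂ] H) : Prop :=
  ∀ f : Lp H 2 μ, ∀ᵐ ζ ∂μ, (S f : X → H) ζ = T ζ ((f : X → H) ζ)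
theorem cayley_transform_of_decomposable
    {X : Type*} [MeasurableSpace X] [StandardBorelSpace X]
    {μ : Measure X} [SigmaFinite μ]
    {H : Type*} [NormedAddCommGroup H] [InnerProductSpace ℂ H]
    [CompleteSpace H] [SecondCountableTopology H] [MeasurableSpace H] [BorelSpace H]
    (T : X → H →L[ℂ] H) (hT : MeasurableFieldOfOperators μ T)
    (S : Lp H 2 μ →L[ℂ] Lp H 2 μ) (hS : IsDecomposableOperatorWith μ S T)
    (hSsa : IsSelfAdjoint S) (hTsa : ∀ᵐ ζ ∂μ, IsSelfAdjoint (T ζ)) :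
    IsUnit (S - Complex.I • (1 : Lp H 2 μ →L[ℂ] Lp H 2 μ)) ∧
    (∀ᵐ ζ ∂μ, IsUnit (T ζ - Complex.I • (1 : H →L[ℂ] H))) ∧
    IsDecomposableOperatorWith μ
      ((S + Complex.I • 1) * Ring.inverse (S - Complex.I • 1))
      (fun ζ => (T ζ + Complex.I • 1) * Ring.inverse (T ζ - Complex.I • 1)) := by
  have hSu : IsUnit (S - Complex.I • (1 : Lp H 2 μ →L[ℂ] Lp H 2 μ)) := sa_unit_aux hSsa
  have hTu : ∀ᵐ ζ ∂μ, IsUnit (T ζ - Complex.I • (1 : H →L[ℂ] H)) :=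
    hTsa.mono fun ζ h => sa_unit_aux h
  refine ⟨hSu, hTu, ?_⟩
  intro g
  set f : Lp H 2 μ := Ring.inverse (S - Complex.I • 1) g with hf
  have hfg : (S - Complex.I • 1) f = g := by
    have := Ring.mul_inverse_cancel _ hSu
    calc (S - Complex.I • 1) f
        = ((S - Complex.I • 1) * Ring.inverse (S - Complex.I • 1)) g := rfl
      _ = g := by rw [this]; rfl
  -- coeFn identities
  have hsub : ((S - Complex.I • 1) f : Lp H 2 μ) = S f - Complex.I • f := by
    simp [ContinuousLinearMap.sub_apply, ContinuousLinearMap.smul_apply]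
  have hadd : ((S + Complex.I • 1) f : Lp H 2 μ) = S f + Complex.I • f := by
    simp [ContinuousLinearMap.add_apply, ContinuousLinearMap.smul_apply]
  have h1 := hS f
  have h2 : (((S : Lp H 2 μ →L[ℂ] Lp H 2 μ) f - Complex.I • f : Lp H 2 μ) : X → H)
      =ᵐ[μ] fun ζ => (S f : X → H) ζ - Complex.I • (f : X → H) ζ :=
    (Lp.coeFn_sub _ _).trans <| by
      filter_upwards [Lp.coeFn_smul Complex.I f] with ζ h
      simp [h]
  have h3 : ((S f + Complex.I • f : Lp H 2 μ) : X → H)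
      =ᵐ[μ] fun ζ => (S f : X → H) ζ + Complex.I • (f : X → H) ζ :=
    (Lp.coeFn_add _ _).trans <| by
      filter_upwards [Lp.coeFn_smul Complex.I f] with ζ h
      simp [h]
  filter_upwards [h1, h2, h3, hTu] with ζ hS1 hS2 hS3 hTuζ
  have hgf : (g : X → H) ζ = (T ζ - Complex.I • 1) ((f : X → H) ζ) := by
    rw [← hfg, hsub, hS2]
    simp [hS1, ContinuousLinearMap.sub_apply, ContinuousLinearMap.smul_apply]
  have hfval : (f : X → H) ζ = Ring.inverse (T ζ - Complex.I • 1) ((g : X → H) ζ) := by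
    rw [hgf, ← ContinuousLinearMap.comp_apply, ← ContinuousLinearMap.mul_def,
      Ring.inverse_mul_cancel _ hTuζ, ContinuousLinearMap.one_apply]
  calc (((S + Complex.I • 1) * Ring.inverse (S - Complex.I • 1)) g : X → H) ζ
      = ((S + Complex.I • 1) f : X → H) ζ := rfl
    _ = (S f : X → H) ζ + Complex.I • (f : X → H) ζ := by rw [hadd, hS3]
    _ = (T ζ + Complex.I • 1) ((f : X → H) ζ) := by
        simp [hS1, ContinuousLinearMap.add_apply, ContinuousLinearMap.smul_apply]
    _ = ((T ζ + Complex.I • 1) * Ring.inverse (T ζ - Complex.I • 1)) ((g : X → H) ζ) := by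
        rw [hfval]; rfl
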